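/- arXiv:1406.3813 — 2 statements merged into one kernel-verified Lean document; each statement's English description precedes it below -/
import Mathlib

section
/- For a right R-module M, the following are equivalent: (1) M is a T-noncosingular d-CS-Rickart module; (2) M is a d-Rickart module. -/
namespace CSRickartPaper

section Defs

variable {R : Type*} [Ring R] {M : Type*} [AddCommGroup M] [Module R M]

/-- `N` is an essential submodule of `P` (inside the ambient module `M`):
`N ≤ P` and every submodule of `P` intersecting `N` trivially is zero. -/
def EssentialIn (N P : Submodule R M) : Prop :=
  N ≤ P ∧ ∀ K : Submodule R M, K ≤ P → N ⊓ K = ⊥ → K = ⊥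

/-- `N` is a small (superfluous) submodule of `P`. -/
def SmallIn (N P : Submodule R M) : Prop :=
  N ≤ P ∧ ∀ K : Submodule R M, K ≤ P → N ⊔ K = P → K = P

/-- `N` is a direct summand of `M`. -/
def IsDirectSummand (N : Submodule R M) : Prop :=
  ∃ K : Submodule R M, IsCompl N K

/-- `N` lies above the direct summand `D` of `M`: `M = D ⊕ K`, `D ≤ N` and
`N ⊓ K` is small in `K`. -/
def LiesAbove (N D : Submodule R M) : Prop :=
  ∃ K : Submodule R M, IsCompl D K ∧ D ≤ N ∧ SmallIn (N ⊓ K) K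

/-- `N` lies above a direct summand of `M`. -/
def LiesAboveSummand (N : Submodule R M) : Prop :=
  ∃ D : Submodule R M, LiesAbove N D

end Defs

section ModuleDefs

variable (R : Type*) [Ring R] (M : Type*) [AddCommGroup M] [Module R M]

/-- `M` is a CS-Rickart module: the kernel of every endomorphism is essential
in a direct summand `eM`, `e` an idempotent endomorphism. -/
def IsCSRickart : Prop :=
  ∀ φ : Module.End R M, ∃ e : Module.End R M, IsIdempotentElem e ∧
    EssentialIn (LinearMap.ker φ) (LinearMap.range e)

/-- `M` is a d-CS-Rickart module: the image of every endomorphism lies above a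
direct summand of `M`. -/
def IsDCSRickart : Prop :=
  ∀ φ : Module.End R M, LiesAboveSummand (LinearMap.range φ)

/-- `M` is a Rickart module. -/
def IsRickart : Prop :=
  ∀ φ : Module.End R M, ∃ e : Module.End R M, IsIdempotentElem e ∧
    LinearMap.ker φ = LinearMap.range e

/-- `M` is a dual Rickart module. -/
def IsDRickart : Prop :=
  ∀ φ : Module.End R M, ∃ e : Module.End R M, IsIdempotentElem e ∧
    LinearMap.range φ = LinearMap.range e

/-- `M` is a CS (extending) module. -/
def IsCSModule : Prop :=
  ∀ N : Submodule R M, ∃ D : Submodule R M, IsDirectSummand D ∧ EssentialIn N D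

/-- `M` is a lifting (d-CS) module. -/
def IsLifting : Prop :=
  ∀ N : Submodule R M, LiesAboveSummand N

/-- `M` is a singular module: the annihilator of every element is an essential
ideal of `R`. -/
def IsSingularModule : Prop :=
  ∀ m : M, EssentialIn (LinearMap.ker (LinearMap.toSpanSingleton R M m)) (⊤ : Submodule R R)

/-- `M` is uniform: every nonzero submodule is essential. -/
def IsUniformModule : Prop :=
  ∀ N : Submodule R M, N ≠ ⊥ → EssentialIn N (⊤ : Submodule R M)

/-- `M` satisfies the C₂ condition: every submodule isomorphic to a direct
summand is itself a direct summand. -/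
def IsC2 : Prop :=
  ∀ N D : Submodule R M, IsDirectSummand D → Nonempty (N ≃ₗ[R] D) → IsDirectSummand N

/-- `M` is K-nonsingular. -/
def IsKNonsingular : Prop :=
  ∀ φ : Module.End R M, ∀ N : Submodule R M, EssentialIn N (⊤ : Submodule R M) →
    N ≤ LinearMap.ker φ → φ = 0

/-- `M` is T-noncosingular. -/
def IsTNoncosingular : Prop :=
  ∀ φ : Module.End R M, φ ≠ 0 → ¬ SmallIn (LinearMap.range φ) (⊤ : Submodule R M)

/-- `M` is an SIP-CS module. -/
def IsSIPCS : Prop :=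
  ∀ A B : Submodule R M, IsDirectSummand A → IsDirectSummand B →
    ∃ D : Submodule R M, IsDirectSummand D ∧ EssentialIn (A ⊓ B) D

/-- `M` is an SSP-d-CS module. -/
def IsSSPdCS : Prop :=
  ∀ A B : Submodule R M, IsDirectSummand A → IsDirectSummand B →
    LiesAboveSummand (A ⊔ B)

end ModuleDefs

section RelDefs

variable (R : Type*) [Ring R] (M N : Type*) [AddCommGroup M] [Module R M]
  [AddCommGroup N] [Module R N]

/-- `M` is relatively CS-Rickart to `N`. -/
def IsRelCSRickart : Prop :=
  ∀ φ : M →ₗ[R] N, ∃ e : Module.End R M, IsIdempotentElem e ∧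
    EssentialIn (LinearMap.ker φ) (LinearMap.range e)

/-- `M` is relatively d-CS-Rickart to `N`. -/
def IsRelDCSRickart : Prop :=
  ∀ φ : M →ₗ[R] N, LiesAboveSummand (LinearMap.range φ)

/-- `N` is `M`-injective. -/
def IsRelInjective : Prop :=
  ∀ (A : Submodule R M) (f : A →ₗ[R] N), ∃ g : M →ₗ[R] N, ∀ a : A, g a = f a

end RelDefs

section RingDefs

variable (R : Type*) [Ring R]

/-- The annihilator of an element `a` of `R`, as an ideal (kernel of `r ↦ r • a`). -/
def annElem (a : R) : Submodule R R :=
  LinearMap.ker (LinearMap.toSpanSingleton R R a)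

/-- The annihilator of a subset `X` of `R`. -/
def annSet (X : Set R) : Submodule R R :=
  ⨅ x ∈ X, annElem R x

/-- The principal ideal generated by `e`, i.e. the image of `r ↦ r • e`. -/
def idealGen (e : R) : Submodule R R :=
  LinearMap.range (LinearMap.toSpanSingleton R R e)

/-- `R` is an ACS ring: the annihilator of every element is essential in a
direct summand `eR` of `R`. -/
def IsACSRing : Prop :=
  ∀ a : R, ∃ e : R, IsIdempotentElem e ∧ EssentialIn (annElem R a) (idealGen R e)

/-- `R` is an essentially Baer ring. -/
def IsEssentiallyBaer : Prop :=
  ∀ X : Set R, X.Nonempty → ∃ e : R, IsIdempotentElem e ∧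
    EssentialIn (annSet R X) (idealGen R e)

/-- The Jacobson radical of the ring `R`. -/
noncomputable def jacRad : Ideal R := Ideal.jacobson (⊥ : Ideal R)

/-- `R` is semiregular: `R/J(R)` is von Neumann regular and idempotents lift
modulo `J(R)` (stated elementwise). -/
def IsSemiregularRing : Prop :=
  (∀ a : R, ∃ b : R, a - a * b * a ∈ jacRad R) ∧
  (∀ a : R, a - a * a ∈ jacRad R →
    ∃ e : R, IsIdempotentElem e ∧ e - a ∈ jacRad R)

/-- `J(R)` coincides with the singular ideal `Z(R)`. -/
def JacEqSingular : Prop :=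
  ∀ a : R, a ∈ jacRad R ↔ EssentialIn (annElem R a) (⊤ : Submodule R R)

end RingDefs

section GenDefs

variable {R : Type*} [Ring R] {M : Type*} [AddCommGroup M] [Module R M]

/-- A submodule is `n`-generated if it is spanned by at most `n` elements. -/
def NGen (n : ℕ) (N : Submodule R M) : Prop :=
  ∃ f : Fin n → M, Submodule.span R (Set.range f) = N

end GenDefs

end CSRickartPaper

namespace CSRickartPaper

section Proof

variable {R : Type*} [Ring R] {M : Type*} [AddCommGroup M] [Module R M]

lemma smallIn_top_of_smallIn {N K : Submodule R M} (h : SmallIn N K) :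
    SmallIn N (⊤ : Submodule R M) := by
  refine ⟨le_top, fun X _ hX => ?_⟩
  have hNK : N ≤ K := h.1
  have hmod : N ⊔ (X ⊓ K) = K := by
    rw [← sup_inf_assoc_of_le X hNK, hX, top_inf_eq]

  have := h.2 (X ⊓ K) inf_le_right hmod
  have hKX : K ≤ X := by rw [← this]; exact inf_le_left
  have : (⊤ : Submodule R M) ≤ X := by
    rw [← hX]; exact sup_le (hNK.trans hKX) le_rfl
  exact top_le_iff.mp this

/-- the idempotent projection onto `D` along `K` -/
noncomputable def projEnd (D K : Submodule R M) (h : IsCompl D K) : Module.End R M :=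
  D.subtype ∘ₗ D.projectionOnto K h

lemma projEnd_idem (D K : Submodule R M) (h : IsCompl D K) :
    IsIdempotentElem (projEnd D K h) := by
  ext x
  simp [projEnd, Module.End.mul_apply, Submodule.projectionOnto_apply_left]

lemma projEnd_range (D K : Submodule R M) (h : IsCompl D K) :
    LinearMap.range (projEnd D K h) = D := by
  rw [projEnd, LinearMap.range_comp, Submodule.range_projectionOnto,
    Submodule.map_top, Submodule.range_subtype]

lemma projEnd_ker (D K : Submodule R M) (h : IsCompl D K) :
    LinearMap.ker (projEnd D K h) = K := by
  rw [projEnd, LinearMap.ker_comp, Submodule.ker_subtype, Submodule.comap_bot,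
    Submodule.ker_projectionOnto]

lemma projEnd_fix {D K : Submodule R M} (h : IsCompl D K) {x : M} (hx : x ∈ D) :
    projEnd D K h x = x := by
  simpa [projEnd] using congrArg (Submodule.subtype D)
    (Submodule.projectionOnto_apply_left h ⟨x, hx⟩)

end Proof

/-- `M` is a T-noncosingular d-CS-Rickart module iff `M` is a dual Rickart module. -/
theorem tNoncosingular_dcsRickart_iff_dRickart
    {R : Type*} [Ring R] {M : Type*} [AddCommGroup M] [Module R M] :
    (IsTNoncosingular R M ∧ IsDCSRickart R M) ↔ IsDRickart R M := by
  constructor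
  · rintro ⟨hT, hD⟩ φ
    obtain ⟨D, K, hc, hDle, hsmall⟩ := hD φ
    -- projection onto K along D
    set π := projEnd K D hc.symm with hπ
    -- range (π ∘ φ) = range φ ⊓ K
    have hdecomp : LinearMap.range φ = D ⊔ (LinearMap.range φ ⊓ K) := by
      have h := sup_inf_assoc_of_le K hDle
      rw [inf_comm (LinearMap.range φ) K, ← h, hc.sup_eq_top, top_inf_eq]
    have hmap : Submodule.map π (LinearMap.range φ) = LinearMap.range φ ⊓ K := by
      have h1 : Submodule.map π D = ⊥ := by
        rw [eq_bot_iff]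
        rintro y ⟨x, hx, rfl⟩
        have : x ∈ LinearMap.ker π := by rw [hπ, projEnd_ker]; exact hx
        simpa using this
      have h2 : Submodule.map π (LinearMap.range φ ⊓ K) = LinearMap.range φ ⊓ K := by
        apply le_antisymm
        · intro y hy
          obtain ⟨x, hx, rfl⟩ := hy
          rwa [projEnd_fix hc.symm hx.2]
        · intro y hy
          exact ⟨y, hy, projEnd_fix hc.symm hy.2⟩
      conv_lhs => rw [hdecomp]
      rw [Submodule.map_sup, h1, h2, bot_sup_eq]
    have hrange : LinearMap.range (π * φ) = LinearMap.range φ ⊓ K := by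
      rw [Module.End.mul_eq_comp, LinearMap.range_comp, hmap]
    have hzero : π * φ = 0 := by
      by_contra hne
      exact hT (π * φ) hne (hrange ▸ smallIn_top_of_smallIn hsmall)
    -- range φ ≤ ker π = D
    have hle : LinearMap.range φ ≤ D := by
      intro y hy
      obtain ⟨x, rfl⟩ := hy
      have : π (φ x) = 0 := by
        have := congrFun (congrArg DFunLike.coe hzero) x
        simpa [Module.End.mul_apply] using this
      have : φ x ∈ LinearMap.ker π := this
      rwa [hπ, projEnd_ker] at this
    have heq : LinearMap.range φ = D := le_antisymm hle hDle
    exact ⟨projEnd D K hc, projEnd_idem D K hc, by rw [heq, projEnd_range]⟩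
  · intro hDR
    have hidem : ∀ e : Module.End R M, IsIdempotentElem e →
        IsCompl (LinearMap.range e) (LinearMap.ker e) := by
      intro e he
      have hinf : LinearMap.range e ⊓ LinearMap.ker e = ⊥ := by
        apply eq_bot_iff.mpr
        rintro x ⟨⟨y, rfl⟩, hk⟩
        have : e (e y) = 0 := hk
        have h2 : e (e y) = e y := by
          have := congrFun (congrArg DFunLike.coe he) y
          simpa [Module.End.mul_apply] using this
        simp [h2] at this
        simp [this]
      have hsup : LinearMap.range e ⊔ LinearMap.ker e = ⊤ := by
        rw [eq_top_iff]
        intro x _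
        have hx : x = e x + (x - e x) := by abel
        have h1 : e x ∈ LinearMap.range e := ⟨x, rfl⟩
        have h2 : x - e x ∈ LinearMap.ker e := by
          have h3 : e (e x) = e x := by
            have := congrFun (congrArg DFunLike.coe he) x
            simpa [Module.End.mul_apply] using this
          simp [LinearMap.mem_ker, map_sub, h3]
        exact hx ▸ Submodule.add_mem_sup h1 h2
      exact ⟨disjoint_iff.mpr hinf, codisjoint_iff.mpr hsup⟩
    constructor
    · intro φ hφ hsm
      obtain ⟨e, he, hre⟩ := hDR φ
      have hc := hidem e he
      have hker : LinearMap.ker e = ⊤ :=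
        hsm.2 (LinearMap.ker e) le_top (by rw [hre, hc.sup_eq_top])
      have he0 : e = 0 := LinearMap.ker_eq_top.mp hker
      have : LinearMap.range φ = ⊥ := by rw [hre, he0, LinearMap.range_zero]
      exact hφ (LinearMap.range_eq_bot.mp this)
    · intro φ
      obtain ⟨e, he, hre⟩ := hDR φ
      have hc := hidem e he
      refine ⟨LinearMap.range e, LinearMap.ker e, hc, hre.ge, ?_⟩
      have : LinearMap.range φ ⊓ LinearMap.ker e = ⊥ := by
        rw [hre, disjoint_iff.mp hc.disjoint]
      rw [this]
      exact ⟨bot_le, fun X hX h => by rwa [bot_sup_eq] at h⟩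


end CSRickartPaper
end

section
/- Let R be a ring with the minimum condition on right annihilators, i.e., R contains no infinite strictly descending chain of right ideals that are right annihilators of subsets of R. Then the following are equivalent: (1) R is a right ACS ring; (2) R is a right essentially Baer ring. -/
namespace CSRickartPaper

section Aux

variable {R : Type*} [Ring R]

lemma mem_annElem {a r : R} : r ∈ annElem R a ↔ r * a = 0 := by
  simp [annElem, LinearMap.mem_ker, LinearMap.toSpanSingleton_apply, smul_eq_mul]

lemma mem_annSet {X : Set R} {r : R} : r ∈ annSet R X ↔ ∀ x ∈ X, r * x = 0 := by
  simp [annSet, Submodule.mem_iInf, mem_annElem]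

lemma mem_idealGen {e x : R} (he : IsIdempotentElem e) :
    x ∈ idealGen R e ↔ x * e = x := by
  constructor
  · rintro ⟨r, rfl⟩
    simp only [LinearMap.toSpanSingleton_apply, smul_eq_mul, mul_assoc, he.eq]
  · intro h
    exact ⟨x, by simp [LinearMap.toSpanSingleton_apply, smul_eq_mul, h]⟩

lemma annSet_singleton (a : R) : annSet R ({a} : Set R) = annElem R a := by
  ext r; simp [mem_annSet, mem_annElem]

lemma annSet_insert (a : R) (s : Set R) :
    annSet R (insert a s) = annElem R a ⊓ annSet R s := by
  ext r
  simp [mem_annSet, mem_annElem, Submodule.mem_inf, forall_and]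

lemma annSet_antitone {s t : Set R} (h : s ⊆ t) : annSet R t ≤ annSet R s := by
  intro r hr
  rw [mem_annSet] at hr ⊢
  exact fun x hx => hr x (h hx)

lemma essentialIn_trans {M : Type*} [AddCommGroup M] [Module R M]
    {N P Q : Submodule R M} (h1 : EssentialIn N P) (h2 : EssentialIn P Q) :
    EssentialIn N Q := by
  refine ⟨h1.1.trans h2.1, fun K hK hNK => ?_⟩
  have hPK : P ⊓ K = ⊥ := by
    refine h1.2 (P ⊓ K) inf_le_left ?_
    have hle : N ⊓ (P ⊓ K) ≤ N ⊓ K := inf_le_inf_left N inf_le_right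
    rw [hNK] at hle
    exact le_bot_iff.1 hle
  exact h2.2 K hK hPK

lemma essentialIn_inf {M : Type*} [AddCommGroup M] [Module R M]
    {N P : Submodule R M} (h : EssentialIn N P) (T : Submodule R M) :
    EssentialIn (N ⊓ T) (P ⊓ T) := by
  refine ⟨inf_le_inf_right T h.1, fun K hK hNK => ?_⟩
  refine h.2 K (hK.trans inf_le_left) ?_
  have : N ⊓ K ≤ (N ⊓ T) ⊓ K :=
    le_inf (le_inf inf_le_left (inf_le_right.trans (hK.trans inf_le_right))) inf_le_right
  rw [hNK] at this
  exact le_bot_iff.1 this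

/-- Key lemma: in a (left) ACS ring, `Re ⊓ ℓ(a)` is essential in a direct summand
generated by an idempotent. -/
lemma key_lemma (hacs : IsACSRing R) (he : IsIdempotentElem e) (a : R) :
    ∃ g : R, IsIdempotentElem g ∧
      EssentialIn (idealGen R e ⊓ annElem R a) (idealGen R g) := by
  obtain ⟨f, hf, hbf⟩ := hacs (e * a)
  -- (1 - e) annihilates e * a
  have h1e : (1 - e) * (e * a) = 0 := by
    rw [← mul_assoc, sub_mul, one_mul, he.eq, sub_self, zero_mul]
  have h1f : (1 - e) * f = 1 - e := (mem_idealGen hf).1 (hbf.1 (mem_annElem.2 h1e))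
  have hef : e * f = f - 1 + e := by
    rw [sub_mul, one_mul] at h1f
    have h2 := sub_sub_cancel f (e * f)
    rw [h1f] at h2
    rw [← h2]; abel
  have hfef : f * e * f = f * e := by
    calc f * e * f = f * (e * f) := by rw [mul_assoc]
    _ = f * (f - 1 + e) := by rw [hef]
    _ = f * f - f * 1 + f * e := by rw [mul_add, mul_sub]
    _ = f * e := by rw [hf.eq, mul_one]; abel
  have hg : IsIdempotentElem (f * e) := by
    show f * e * (f * e) = f * e
    calc f * e * (f * e) = f * e * f * e := by rw [mul_assoc (f * e)]
    _ = f * e * e := by rw [hfef]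
    _ = f * (e * e) := by rw [mul_assoc]
    _ = f * e := by rw [he.eq]
  refine ⟨f * e, hg, ?_, ?_⟩
  · -- Re ⊓ ℓ(a) ≤ R(fe)
    intro x hx
    obtain ⟨hxe, hxa⟩ := hx
    have hxe' : x * e = x := (mem_idealGen he).1 hxe
    have hxa' : x * a = 0 := mem_annElem.1 hxa
    have hxb : x ∈ annElem R (e * a) := by
      rw [mem_annElem, ← mul_assoc, hxe', hxa']
    have hxf : x * f = x := (mem_idealGen hf).1 (hbf.1 hxb)
    rw [mem_idealGen hg, ← mul_assoc, hxf, hxe']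
  · -- essentiality
    intro K hK hdisj
    have hKf : K ≤ idealGen R f := by
      intro x hx
      have hxg : x * (f * e) = x := (mem_idealGen hg).1 (hK hx)
      rw [mem_idealGen hf]
      calc x * f = x * (f * e) * f := by rw [hxg]
      _ = x * (f * e * f) := by rw [mul_assoc]
      _ = x * (f * e) := by rw [hfef]
      _ = x := hxg
    refine hbf.2 K hKf ?_
    rw [eq_bot_iff]
    intro x hx
    obtain ⟨hxb, hxK⟩ := hx
    have hxg : x * (f * e) = x := (mem_idealGen hg).1 (hK hxK)
    have hxe : x * e = x := by
      calc x * e = x * (f * e) * e := by rw [hxg]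
      _ = x * (f * e * e) := by rw [mul_assoc]
      _ = x * (f * (e * e)) := by rw [mul_assoc f e e]
      _ = x * (f * e) := by rw [he.eq]
      _ = x := hxg
    have hxa : x * a = 0 := by
      have := mem_annElem.1 hxb
      rw [← mul_assoc] at this
      rw [← hxe, this]
    have : x ∈ (idealGen R e ⊓ annElem R a) ⊓ K :=
      ⟨⟨(mem_idealGen he).2 hxe, mem_annElem.2 hxa⟩, hxK⟩
    rw [hdisj] at this
    exact this

/-- Annihilators of finite nonempty sets are essential in idempotent-generated
summands, in an ACS ring. -/
lemma finset_ess (hacs : IsACSRing R) (s : Finset R) (hs : s.Nonempty) :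
    ∃ e : R, IsIdempotentElem e ∧ EssentialIn (annSet R ↑s) (idealGen R e) := by
  classical
  induction s using Finset.induction_on with
  | empty => exact absurd hs (by simp)
  | @insert a t hat ih =>
    by_cases ht : t.Nonempty
    · obtain ⟨e, he, hess⟩ := ih ht
      obtain ⟨g, hg, hkey⟩ := key_lemma hacs he a
      refine ⟨g, hg, ?_⟩
      have h1 : EssentialIn (annSet R ↑t ⊓ annElem R a) (idealGen R e ⊓ annElem R a) :=
        essentialIn_inf hess (annElem R a)
      have h2 : EssentialIn (annSet R ↑t ⊓ annElem R a) (idealGen R g) :=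
        essentialIn_trans h1 hkey
      have heq : annSet R ↑(insert a t) = annSet R ↑t ⊓ annElem R a := by
        rw [Finset.coe_insert, annSet_insert, inf_comm]
      rw [heq]
      exact h2
    · have ht' : t = ∅ := Finset.not_nonempty_iff_eq_empty.1 ht
      subst ht'
      obtain ⟨e, he, hess⟩ := hacs a
      refine ⟨e, he, ?_⟩
      have : annSet R ↑(insert a (∅ : Finset R)) = annElem R a := by
        simp [annSet_singleton]
      rw [this]
      exact hess

/-- With the minimum condition, a minimal annihilator exists for any property. -/
lemma exists_min_ann
    (hmin : ¬ ∃ f : ℕ → Set R, ∀ k : ℕ, annSet R (f (k + 1)) < annSet R (f k))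
    (P : Set R → Prop) (hP : ∃ s, P s) :
    ∃ s, P s ∧ ∀ t, P t → ¬ annSet R t < annSet R s := by
  by_contra h
  push_neg at h
  obtain ⟨s₀, hs₀⟩ := hP
  choose g hg1 hg2 using h
  apply hmin
  let F : ℕ → {s : Set R // P s} := fun n =>
    Nat.rec ⟨s₀, hs₀⟩ (fun _ p => ⟨g p.1 p.2, hg1 p.1 p.2⟩) n
  exact ⟨fun n => (F n).1, fun k => hg2 (F k).1 (F k).2⟩

end Aux

/-- For a ring with the minimum condition on annihilators, the ACS property and
the essentially Baer property coincide. -/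
theorem acs_iff_essentiallyBaer_of_minCondition
    {R : Type*} [Ring R]
    (hmin : ¬ ∃ f : ℕ → Set R, ∀ k : ℕ, annSet R (f (k + 1)) < annSet R (f k)) :
    IsACSRing R ↔ IsEssentiallyBaer R := by
  constructor
  · intro hacs X hX
    -- find a finite subset with minimal (hence equal) annihilator
    obtain ⟨x₀, hx₀⟩ := hX
    obtain ⟨s₀, ⟨hsub, hfin, hne⟩, hminimal⟩ :=
      exists_min_ann hmin (fun s => s ⊆ X ∧ s.Finite ∧ s.Nonempty)
        ⟨{x₀}, Set.singleton_subset_iff.2 hx₀, Set.finite_singleton x₀,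
          Set.singleton_nonempty x₀⟩
    have hXs : annSet R X = annSet R s₀ := by
      refine le_antisymm (annSet_antitone hsub) ?_
      intro r hr
      rw [mem_annSet]
      intro x hx
      have hP : (insert x s₀ ⊆ X ∧ (insert x s₀).Finite ∧ (insert x s₀).Nonempty) :=
        ⟨Set.insert_subset_iff.2 ⟨hx, hsub⟩, hfin.insert x, Set.insert_nonempty x s₀⟩
      have hle : annSet R (insert x s₀) ≤ annSet R s₀ :=
        annSet_antitone (Set.subset_insert x s₀)
      have hnlt := hminimal _ hP
      have heq : annSet R (insert x s₀) = annSet R s₀ :=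
        le_antisymm hle (by
          by_contra hc
          exact hnlt (lt_of_le_of_ne hle (fun hh => hc (hh ▸ le_rfl))))
      have : r ∈ annSet R (insert x s₀) := heq ▸ hr
      exact mem_annSet.1 this x (Set.mem_insert x s₀)
    obtain ⟨e, he, hess⟩ := finset_ess hacs hfin.toFinset
      (by rwa [← Set.Finite.toFinset_nonempty hfin] at hne)
    refine ⟨e, he, ?_⟩
    rw [hXs, ← hfin.coe_toFinset]
    exact hess
  · intro hEB a
    obtain ⟨e, he, hess⟩ := hEB {a} (Set.singleton_nonempty a)
    rw [annSet_singleton] at hess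
    exact ⟨e, he, hess⟩

end CSRickartPaper
end
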